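/- Let I, K, J be finite index types, let M be a positive semidefinite complex matrix indexed by (I × K) × (I × K), and let N be a positive semidefinite complex matrix indexed by (K × J) × (K × J). Then the link product N * M, defined as the matrix indexed by I × J with entries (N * M)((i,j),(i',j')) = Σ_{k,k'} M((i,k),(i',k')) · N((k,j),(k',j')), is positive semidefinite. -/

import Mathlib

open Matrix ComplexOrder

open Kronecker in
/-- the link product of two PSD matrices is PSD: for `M` PSD on `I × K` and
`N` PSD on `K × J`, the matrix `(N * M)((i,j),(i',j')) = Σ_{k,k'} M((i,k),(i',k'))·N((k,j),(k',j'))`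
is PSD. -/
theorem stmt6 {I K J : Type*} [Fintype I] [Fintype K] [Fintype J]
    (M : Matrix (I × K) (I × K) ℂ) (N : Matrix (K × J) (K × J) ℂ)
    (hM : M.PosSemidef) (hN : N.PosSemidef) :
    (Matrix.of fun (p q : I × J) =>
      ∑ k : K, ∑ k' : K, M (p.1, k) (q.1, k') * N (k, p.2) (k', q.2)).PosSemidef := by
  classical
  obtain ⟨A, hA⟩ : ∃ A : Matrix _ _ ℂ, M = Aᴴ * A := by
    open scoped MatrixOrder in
    exact CStarAlgebra.nonneg_iff_eq_star_mul_self.mp hM.nonneg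
  obtain ⟨B, hB⟩ : ∃ B : Matrix _ _ ℂ, N = Bᴴ * B := by
    open scoped MatrixOrder in
    exact CStarAlgebra.nonneg_iff_eq_star_mul_self.mp hN.nonneg
  have hK : (M ⊗ₖ N).PosSemidef := by
    have h1 : M ⊗ₖ N = (A ⊗ₖ B)ᴴ * (A ⊗ₖ B) := by
      have h2 : (A ⊗ₖ B)ᴴ = Aᴴ ⊗ₖ Bᴴ := by
        ext r s
        simp [conjTranspose_apply, kroneckerMap_apply]
      rw [h2, ← Matrix.mul_kronecker_mul, hA, hB]
    rw [h1]
    exact Matrix.posSemidef_conjTranspose_mul_self _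
  set E : Matrix ((I × K) × (K × J)) (I × J) ℂ :=
    Matrix.of fun r p => if r.1.1 = p.1 ∧ r.2.2 = p.2 ∧ r.1.2 = r.2.1 then 1 else 0 with hE
  have key := hK.conjTranspose_mul_mul_same E
  convert key using 2
  ext p q
  simp only [Matrix.mul_apply, conjTranspose_apply, hE, Matrix.of_apply, kroneckerMap_apply]
  rw [Fintype.sum_prod_type]
  simp only [Fintype.sum_prod_type]
  simp [Finset.mul_sum, Finset.sum_mul, apply_ite, ite_and, Prod.ext_iff]
  rw [Finset.sum_comm]
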